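/- Let B be a finite bipartite graph with left vertices J and right vertices I, each vertex h having a weight w_h > 0, and let α : J × I → ℝ≥0 satisfy: (1) Σ_{i ∈ I} α(j,i) = ε·w_j for every j ∈ J; (2) Σ_{j ∈ J} α(j,i) ≤ w_i for every i ∈ I; (3) α(j,i) > 0 implies w_i ≤ w_j. Then |I| ≥ ε·|J|. -/
import Mathlib


/-- The abstract charging (expansive flow) lemma: if every left vertex `j`
sends total charge `ε * wJ j`, every right vertex `i` receives total charge
at most `wI i`, and charges only go from heavier to lighter vertices
(`α j i > 0 → wI i ≤ wJ j`), then `|I| ≥ ε * |J|`. -/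
theorem charging_lemma {J I : Type} [Fintype J] [Fintype I]
    (wJ : J → ℝ) (wI : I → ℝ) (hwJ : ∀ j, 0 < wJ j) (hwI : ∀ i, 0 < wI i)
    (ε : ℝ) (hε : 0 < ε) (α : J → I → ℝ) (hα : ∀ j i, 0 ≤ α j i)
    (hout : ∀ j, ∑ i, α j i = ε * wJ j)
    (hin : ∀ i, ∑ j, α j i ≤ wI i)
    (hcmp : ∀ j i, 0 < α j i → wI i ≤ wJ j) :
    ε * (Fintype.card J : ℝ) ≤ (Fintype.card I : ℝ) := by
  have key : ∀ j i, α j i / wJ j ≤ α j i / wI i := by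
    intro j i
    rcases eq_or_lt_of_le (hα j i) with h | h
    · simp [← h]
    · exact div_le_div_of_nonneg_left (hα j i) (hwI i) (hcmp j i h)
  calc ε * (Fintype.card J : ℝ) = ∑ j : J, ∑ i : I, α j i / wJ j := by
        have h1 : ∀ j : J, ∑ i : I, α j i / wJ j = ε := fun j => by
          rw [← Finset.sum_div, hout j, mul_div_assoc, div_self (hwJ j).ne', mul_one]
        simp [h1, mul_comm]
    _ ≤ ∑ j : J, ∑ i : I, α j i / wI i :=
        Finset.sum_le_sum fun j _ => Finset.sum_le_sum fun i _ => key j i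
    _ = ∑ i : I, (∑ j : J, α j i) / wI i := by
        rw [Finset.sum_comm]; exact Finset.sum_congr rfl fun i _ => (Finset.sum_div ..).symm
    _ ≤ ∑ i : I, (1 : ℝ) :=
        Finset.sum_le_sum fun i _ => (div_le_one (hwI i)).2 (hin i)
    _ = (Fintype.card I : ℝ) := by simp
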